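/- Suppose the chain of fields satisfies: for all i < i' in J, [k_{i'} : k_i] is infinite, and suppose J has elements α < β < γ. If P is an object of C equipped with morphisms π_n : P → M^α (n ∈ ℕ) such that for every object W of C the map Hom_C(W, P) → Hom_C(W, M^α)^ℕ, ψ ↦ (π_n ∘ ψ), is a bijection (i.e., P is a product of countably many copies of M^α in C restricted to grounded test objects M^β, M^γ), then P is not β-grounded: there is no β ∈ J with β > α such that P is β-grounded. In particular, a countable product of copies of M^α does not exist in the category G of grounded objects. -/

import Mathlib

set_option linter.unusedVariables false

structure ChainObj {J : Type} [LinearOrder J] (k : J → Type) [∀ i, Field (k i)]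
    (f : ∀ i j, i ≤ j → k i →+* k j) where
  V : J → Type
  [acg : ∀ i, AddCommGroup (V i)]
  [mod : ∀ i, Module (k i) (V i)]
  t : ∀ i j (h : i ≤ j), V i →ₛₗ[f i j h] V j
  t_id : ∀ i (x : V i), t i i le_rfl x = x
  t_comp : ∀ i j l (h₁ : i ≤ j) (h₂ : j ≤ l) (x : V i),
    t j l h₂ (t i j h₁ x) = t i l (h₁.trans h₂) x

attribute [instance] ChainObj.acg ChainObj.mod

variable {J : Type} [LinearOrder J] {k : J → Type} [∀ i, Field (k i)]
  {f : ∀ i j, i ≤ j → k i →+* k j}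

@[ext]
structure ChainHom (V W : ChainObj k f) where
  app : ∀ i, V.V i →ₗ[k i] W.V i
  comm : ∀ i j (h : i ≤ j) (x : V.V i), W.t i j h (app i x) = app j (V.t i j h x)

def ChainHom.comp {U V W : ChainObj k f} (g : ChainHom V W) (h : ChainHom U V) :
    ChainHom U W where
  app i := (g.app i).comp (h.app i)
  comm i j hij x := by simp [g.comm, h.comm]

def ChainHom.id (V : ChainObj k f) : ChainHom V V where
  app i := LinearMap.id
  comm i j hij x := rfl

def ChainHom.zero (V W : ChainObj k f) : ChainHom V W where
  app i := 0
  comm i j hij x := by simp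

/-- An object `V` is `α`-grounded if for every `β > α` the component `V β` is spanned
over `k β` by the image of the transition map from level `α`. -/
def IsGrounded (α : J) (V : ChainObj k f) : Prop :=
  ∀ β (h : α < β), Submodule.span (k β) (Set.range (V.t α β h.le)) = ⊤

/-- The component submodule of the representing object `M^j`: zero below `j`, everything
from `j` on. -/
def MjSub (k : J → Type) [∀ i, Field (k i)] (j i : J) : Submodule (k i) (k i) :=
  if i < j then ⊥ else ⊤

theorem one_mem_MjSub {j i : J} (h : j ≤ i) : (1 : k i) ∈ MjSub k j i := by
  simp [MjSub, not_lt.mpr h]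

/-- The object `M^j`, with `M^j_i = 0` for `i < j` and `M^j_i = k_i` for `i ≥ j`, the
transition maps being the field inclusions. -/
def Mj (hf_id : ∀ i (x : k i), f i i le_rfl x = x)
    (hf_comp : ∀ i j l (h₁ : i ≤ j) (h₂ : j ≤ l) (x : k i),
      f j l h₂ (f i j h₁ x) = f i l (h₁.trans h₂) x)
    (j : J) : ChainObj k f where
  V i := MjSub k j i
  t i i' h :=
    { toFun := fun x => ⟨f i i' h x.1, by
        by_cases h' : i' < j
        · have hx : x.1 = 0 := by
            have hx2 := x.2
            simp only [MjSub, if_pos (lt_of_le_of_lt h h'), Submodule.mem_bot] at hx2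
            exact hx2
          simp [MjSub, if_pos h', hx]
        · simp [MjSub, if_neg h']⟩
      map_add' := by intro a b; apply Subtype.ext; simp
      map_smul' := by intro c a; apply Subtype.ext; simp [Submodule.coe_smul] }
  t_id i x := by apply Subtype.ext; simp [hf_id]
  t_comp i j' l h₁ h₂ x := by apply Subtype.ext; simp [hf_comp]

theorem field_aux {K L : Type} [Field K] [Field L] (g : K →+* L)
    (h : ∀ s : Finset L, ∃ x : L, ¬∃ c : L → K, x = ∑ a ∈ s, g (c a) * a) :
    ∃ x : ℕ → L, ∀ (m : ℕ) (a : Fin m → L) (d : Fin m → ℕ → K),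
      ¬ ∀ n, x n = ∑ i, g (d i n) * a i := by
  classical
  letI : Algebra K L := g.toAlgebra
  have hsmul : ∀ (c : K) (y : L), c • y = g c * y := fun c y => Algebra.smul_def c y
  set v : ℕ → Finset L := fun n =>
    Nat.rec ∅ (fun _ prev => insert (Classical.choose (h prev)) prev) n with hv
  set x : ℕ → L := fun n => Classical.choose (h (v n)) with hxdef
  have hv_succ : ∀ n, v (n + 1) = insert (x n) (v n) := fun n => rfl
  have hx_not : ∀ n, x n ∉ Submodule.span K ((v n : Set L)) := by
    intro n hmem
    rcases Submodule.mem_span_finset.1 hmem with ⟨c, -, hc⟩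
    refine Classical.choose_spec (h (v n)) ⟨c, ?_⟩
    have hgoal : x n = ∑ a ∈ v n, g (c a) * a := by
      rw [← hc]; exact Finset.sum_congr rfl fun a _ => hsmul _ _
    exact hgoal
  have hsub : ∀ m n, m < n → x m ∈ v n := by
    intro m n hmn
    induction n with
    | zero => omega
    | succ n ih =>
      rw [hv_succ]
      rcases Nat.lt_succ_iff_lt_or_eq.1 hmn with h' | h'
      · exact Finset.mem_insert_of_mem (ih h')
      · subst h'; exact Finset.mem_insert_self _ _
  have hli : ∀ n, LinearIndependent K (fun i : Fin n => x i.1) := by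
    intro n
    induction n with
    | zero => exact linearIndependent_empty_type
    | succ n ih =>
      have heq : (fun i : Fin (n + 1) => x i.1)
          = Fin.snoc (fun i : Fin n => x i.1) (x n) := by
        funext i
        induction i using Fin.lastCases with
        | last => simp [Fin.snoc_last]
        | cast j => simp [Fin.snoc_castSucc]
      rw [heq, linearIndependent_fin_snoc]
      refine ⟨ih, fun hmem => hx_not n ?_⟩
      refine Submodule.span_mono ?_ hmem
      rintro _ ⟨i, rfl⟩
      exact hsub i.1 n i.2
  refine ⟨x, fun m a d hall => ?_⟩
  have hxmem : ∀ i : Fin (m + 1), x i.1 ∈ Submodule.span K (Set.range a) := by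
    intro i
    rw [hall i.1]
    refine Submodule.sum_mem _ fun j _ => ?_
    rw [← hsmul]
    exact Submodule.smul_mem _ _ (Submodule.subset_span ⟨j, rfl⟩)
  have hle := linearIndependent_le_span' (fun i : Fin (m + 1) => x i.1) (hli (m + 1))
    (Set.range a) (by rintro _ ⟨i, rfl⟩; exact hxmem i)
  have h1 : m + 1 ≤ Fintype.card (Set.range a) := by
    have := hle
    rw [Cardinal.mk_fintype, Fintype.card_fin] at this
    exact_mod_cast this
  have h2 : Fintype.card (Set.range a) ≤ m := by
    simpa using Fintype.card_range_le a
  omega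

theorem mem_MjSub_of_le {j i : J} (h : j ≤ i) (x : k i) : x ∈ MjSub k j i := by
  simp [MjSub, not_lt_of_ge h]

variable (hf_id : ∀ i (x : k i), f i i le_rfl x = x)
    (hf_comp : ∀ i j l (h₁ : i ≤ j) (h₂ : j ≤ l) (x : k i),
      f j l h₂ (f i j h₁ x) = f i l (h₁.trans h₂) x)

/-- Evaluation of a component of `M^j` as an element of `k i`, as a linear map. -/
def MjV (j i : J) : (Mj hf_id hf_comp j).V i →ₗ[k i] k i :=
  (MjSub k j i).subtype

/-- The canonical generator of `M^j` at a level `i ≥ j`. -/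
def MjOne {j i : J} (h : j ≤ i) : (Mj hf_id hf_comp j).V i :=
  (⟨1, one_mem_MjSub h⟩ : MjSub k j i)

/-- The element of `M^j` at level `i ≥ j` given by `x : k i`. -/
def MjEl {j i : J} (h : j ≤ i) (x : k i) : (Mj hf_id hf_comp j).V i :=
  (⟨x, mem_MjSub_of_le h x⟩ : MjSub k j i)

theorem MjV_t {j i i' : J} (h : i ≤ i') (y : (Mj hf_id hf_comp j).V i) :
    MjV hf_id hf_comp j i' ((Mj hf_id hf_comp j).t i i' h y)
      = f i i' h (MjV hf_id hf_comp j i y) := rfl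

theorem MjV_el {j i : J} (h : j ≤ i) (x : k i) :
    MjV hf_id hf_comp j i (MjEl hf_id hf_comp h x) = x := rfl

theorem MjV_one {j i : J} (h : j ≤ i) :
    MjV hf_id hf_comp j i (MjOne hf_id hf_comp h) = 1 := rfl

theorem MjV_zero_of_lt {j i : J} (h : i < j) (y : (Mj hf_id hf_comp j).V i) :
    MjV hf_id hf_comp j i y = 0 := by
  have h2 : ∀ z : MjSub k j i, (z : k i) = 0 := fun z => by
    simpa [MjSub, if_pos h] using z.2
  exact h2 y

theorem Mj_eq_zero_of_lt {j i : J} (h : i < j) (y : (Mj hf_id hf_comp j).V i) :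
    y = 0 := by
  have h2 : ∀ z : MjSub k j i, z = 0 := fun z =>
    Subtype.ext (by simpa [MjSub, if_pos h] using z.2)
  exact h2 y

theorem Mj_t_one {j i : J} (h : j ≤ i) :
    (Mj hf_id hf_comp j).t j i h (MjOne hf_id hf_comp (le_refl j))
      = MjOne hf_id hf_comp h :=
  Subtype.ext (map_one (f j i h))

theorem Mj_smul_one {j i : J} (h : j ≤ i) (x : (Mj hf_id hf_comp j).V i) :
    MjV hf_id hf_comp j i x • MjOne hf_id hf_comp h = x := by
  have h2 : ∀ z : MjSub k j i, (z : k i) • (⟨1, one_mem_MjSub h⟩ : MjSub k j i) = z :=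
    fun z => Subtype.ext (by rw [Submodule.coe_smul, smul_eq_mul, mul_one])
  exact h2 x

/-- The morphism `M^δ → W` determined by an element `w : W.V δ`. -/
def toHom (δ : J) (W : ChainObj k f) (w : W.V δ) :
    ChainHom (Mj hf_id hf_comp δ) W where
  app i :=
    if h : δ ≤ i then
      { toFun := fun x => MjV hf_id hf_comp δ i x • W.t δ i h w
        map_add' := fun a b => by
          show MjV hf_id hf_comp δ i (a + b) • W.t δ i h w
              = MjV hf_id hf_comp δ i a • W.t δ i h w
                + MjV hf_id hf_comp δ i b • W.t δ i h w
          rw [map_add, add_smul]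
        map_smul' := fun c a => by
          show MjV hf_id hf_comp δ i (c • a) • W.t δ i h w
              = c • MjV hf_id hf_comp δ i a • W.t δ i h w
          rw [map_smul, smul_eq_mul, mul_smul] }
    else 0
  comm i j hij x := by
    beta_reduce
    by_cases h : δ ≤ i
    · have hj : δ ≤ j := h.trans hij
      rw [dif_pos h, dif_pos hj]
      show W.t i j hij (MjV hf_id hf_comp δ i x • W.t δ i h w)
          = MjV hf_id hf_comp δ j ((Mj hf_id hf_comp δ).t i j hij x) • W.t δ j hj w
      rw [LinearMap.map_smulₛₗ, W.t_comp, MjV_t]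
    · rw [dif_neg h]
      by_cases hj : δ ≤ j
      · rw [dif_pos hj, LinearMap.zero_apply, map_zero]
        show (0 : W.V j)
            = MjV hf_id hf_comp δ j ((Mj hf_id hf_comp δ).t i j hij x) • W.t δ j hj w
        rw [MjV_t, MjV_zero_of_lt hf_id hf_comp (not_le.1 h), map_zero, zero_smul]
      · rw [dif_neg hj, LinearMap.zero_apply, map_zero, LinearMap.zero_apply]

theorem toHom_self (δ : J) (W : ChainObj k f) (w : W.V δ) :
    (toHom hf_id hf_comp δ W w).app δ (MjOne hf_id hf_comp (le_refl δ)) = w := by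
  simp only [toHom]
  rw [dif_pos (le_refl δ)]
  show MjV hf_id hf_comp δ δ (MjOne hf_id hf_comp (le_refl δ)) • W.t δ δ le_rfl w = w
  rw [MjV_one, one_smul, W.t_id]

theorem homMj_ext (δ : J) (W : ChainObj k f)
    (g h : ChainHom (Mj hf_id hf_comp δ) W)
    (heq : g.app δ (MjOne hf_id hf_comp (le_refl δ))
      = h.app δ (MjOne hf_id hf_comp (le_refl δ))) :
    g = h := by
  apply ChainHom.ext
  funext i
  apply LinearMap.ext
  intro x
  by_cases hδ : δ ≤ i
  · have hx : x = MjV hf_id hf_comp δ i x • MjOne hf_id hf_comp hδ :=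
      (Mj_smul_one hf_id hf_comp hδ x).symm
    rw [hx, map_smul, map_smul, ← Mj_t_one hf_id hf_comp hδ, ← g.comm, ← h.comm, heq]
  · rw [Mj_eq_zero_of_lt hf_id hf_comp (not_le.1 hδ) x, map_zero, map_zero]

/-- Suppose every extension `k_i ⊆ k_{i'}` (`i < i'`) in the chain has infinite degree
(no finite subset of `k_{i'}` spans it over `k_i`), and every element of `J` has a
strictly larger one.  If `P` is an object of `C` equipped with morphisms
`π n : P → M^α` (`n : ℕ`) such that for every object `W` the map
`ψ ↦ (n ↦ π n ∘ ψ)` is a bijection `Hom(W, P) ≃ Hom(W, M^α)^ℕ` (i.e. `P` is a product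
of countably many copies of `M^α` in `C`), then there is no `β > α` such that `P` is
`β`-grounded; in particular no countable product of copies of `M^α` exists in the
category `G` of grounded objects. -/
theorem stmt16
    (hf_id : ∀ i (x : k i), f i i le_rfl x = x)
    (hf_comp : ∀ i j l (h₁ : i ≤ j) (h₂ : j ≤ l) (x : k i),
      f j l h₂ (f i j h₁ x) = f i l (h₁.trans h₂) x)
    (hinf : ∀ i j (h : i ≤ j), i < j → ∀ s : Finset (k j),
      ∃ x : k j, ¬ ∃ c : k j → k i, x = ∑ a ∈ s, f i j h (c a) * a)
    (hub : ∀ i : J, ∃ i', i < i')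
    (α : J) (P : ChainObj k f)
    (π : ℕ → ChainHom P (Mj hf_id hf_comp α))
    (huniv : ∀ W : ChainObj k f,
      Function.Bijective (fun ψ : ChainHom W P => fun n => (π n).comp ψ)) :
    ¬ ∃ β, α < β ∧ IsGrounded β P := by
  rintro ⟨β, hαβ, hg⟩
  obtain ⟨γ, hβγ⟩ := hub β
  classical
  have hβγle : β ≤ γ := hβγ.le
  have hαγ : α ≤ γ := (hαβ.trans hβγ).le
  -- surjectivity of evaluation at each level `δ ≥ α`
  have hsurj : ∀ (δ : J) (hαδ : α ≤ δ) (c : ℕ → k δ),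
      ∃ p : P.V δ, ∀ n, MjV hf_id hf_comp α δ ((π n).app δ p) = c n := by
    intro δ hαδ c
    obtain ⟨ψ, hψ⟩ := (huniv (Mj hf_id hf_comp δ)).2
      (fun n => toHom hf_id hf_comp δ (Mj hf_id hf_comp α) (MjEl hf_id hf_comp hαδ (c n)))
    refine ⟨ψ.app δ (MjOne hf_id hf_comp (le_refl δ)), fun n => ?_⟩
    have h1 : (π n).comp ψ
        = toHom hf_id hf_comp δ (Mj hf_id hf_comp α) (MjEl hf_id hf_comp hαδ (c n)) :=
      congrFun hψ n
    have h2 := congrArg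
      (fun g : ChainHom (Mj hf_id hf_comp δ) (Mj hf_id hf_comp α) =>
        MjV hf_id hf_comp α δ (g.app δ (MjOne hf_id hf_comp (le_refl δ)))) h1
    beta_reduce at h2
    rw [toHom_self, MjV_el] at h2
    exact h2
  -- injectivity of evaluation at level γ
  have hinj : ∀ p q : P.V γ,
      (∀ n, MjV hf_id hf_comp α γ ((π n).app γ p) = MjV hf_id hf_comp α γ ((π n).app γ q))
        → p = q := by
    intro p q hpq
    have h2 : (fun n => (π n).comp (toHom hf_id hf_comp γ P p))
        = fun n => (π n).comp (toHom hf_id hf_comp γ P q) := by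
      funext n
      apply homMj_ext
      show (π n).app γ ((toHom hf_id hf_comp γ P p).app γ (MjOne hf_id hf_comp (le_refl γ)))
          = (π n).app γ ((toHom hf_id hf_comp γ P q).app γ (MjOne hf_id hf_comp (le_refl γ)))
      rw [toHom_self, toHom_self]
      have h3 : ∀ y z : MjSub k α γ, (y : k γ) = (z : k γ) → y = z := fun y z hyz =>
        Subtype.ext hyz
      exact h3 _ _ (hpq n)
    have h3 := (huniv (Mj hf_id hf_comp γ)).1 h2
    have h4 := congrArg (fun ψ : ChainHom (Mj hf_id hf_comp γ) P =>
      ψ.app γ (MjOne hf_id hf_comp (le_refl γ))) h3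
    simpa only [toHom_self] using h4
  -- the generic sequence
  obtain ⟨x, hx⟩ := field_aux (f β γ hβγle) (hinf β γ hβγle hβγ)
  obtain ⟨p, hp⟩ := hsurj γ hαγ x
  have hmem : p ∈ Submodule.span (k γ) (Set.range (P.t β γ hβγle)) := by
    rw [hg γ hβγ]; trivial
  rw [Submodule.mem_span_set'] at hmem
  obtain ⟨m, coef, vs, hsum⟩ := hmem
  choose q hq using fun i => (vs i).2
  refine hx m coef (fun i n => MjV hf_id hf_comp α β ((π n).app β (q i))) fun n => ?_
  show x n = ∑ i, f β γ hβγle (MjV hf_id hf_comp α β ((π n).app β (q i))) * coef i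
  have e2 : ∀ i, MjV hf_id hf_comp α γ ((π n).app γ ((vs i : P.V γ)))
      = f β γ hβγle (MjV hf_id hf_comp α β ((π n).app β (q i))) := by
    intro i
    rw [← hq i, ← (π n).comm β γ hβγle (q i)]
    exact MjV_t hf_id hf_comp hβγle ((π n).app β (q i))
  have e3 : x n = ∑ i, coef i * MjV hf_id hf_comp α γ ((π n).app γ ((vs i : P.V γ))) := by
    have h7 : ((MjV hf_id hf_comp α γ).comp ((π n).app γ)) p
        = ∑ i, coef i * ((MjV hf_id hf_comp α γ).comp ((π n).app γ)) ((vs i : P.V γ)) := by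
      rw [← hsum, map_sum]
      exact Finset.sum_congr rfl fun i _ => by rw [map_smul, smul_eq_mul]
    rw [← hp n]
    exact h7
  rw [e3]
  exact Finset.sum_congr rfl fun i _ => by rw [e2 i, mul_comm]
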